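/- Let x₁ < x₂ and let u ∈ C⁴([x₁,x₂]) satisfy the elastica equation (1/√(1+u'²)) · d/dx( κ_u'/√(1+u'²) ) + (1/2)κ_u³ = 0 on (x₁,x₂), where κ_u = u''/(1+u'²)^{3/2}. Define v(x) = u''(x)/(1+u'(x)²)^{5/4}. Then for every x ∈ [x₁,x₂], min{v(x₁), v(x₂)} ≤ v(x) ≤ max{v(x₁), v(x₂)}. -/

import Mathlib

open Real MeasureTheory

lemma qpow {a : ℝ} (ha : 0 < a) (c : ℝ) (k : ℕ) (hc : c = k / 4) :
    a ^ c = (a ^ ((1:ℝ)/4)) ^ k := by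
  subst hc
  rw [← Real.rpow_natCast (a ^ ((1:ℝ)/4)) k, ← Real.rpow_mul ha.le]
  ring_nf

lemma qpow4 {a : ℝ} (ha : 0 < a) : (a ^ ((1:ℝ)/4)) ^ 4 = a := by
  rw [← Real.rpow_natCast (a ^ ((1:ℝ)/4)) 4, ← Real.rpow_mul ha.le]
  norm_num

/-- The curvature of the graph `(x, u x)`. -/
noncomputable def curv (u : ℝ → ℝ) (x : ℝ) : ℝ :=
  iteratedDeriv 2 u x / (1 + deriv u x ^ 2) ^ ((3:ℝ)/2)

/-- `u` satisfies the elastica equation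
`(1/√(1+u'²)) (κ_u'/√(1+u'²))' + κ_u³/2 = 0` on the set `E`. -/
def ElasticaOn (u : ℝ → ℝ) (E : Set ℝ) : Prop :=
  ∀ x ∈ E,
    (1 / Real.sqrt (1 + deriv u x ^ 2)) *
        deriv (fun y => deriv (curv u) y / Real.sqrt (1 + deriv u y ^ 2)) x
      + (1/2) * curv u x ^ 3 = 0

/-- Comparison principle: if `u ∈ C⁴` solves the elastica equation on `(x₁,x₂)`, then
`v = u''/(1+u'²)^{5/4}` attains its extrema at the endpoints. -/
theorem stmt_4 (x₁ x₂ : ℝ) (hlt : x₁ < x₂) (u : ℝ → ℝ) (hu : ContDiff ℝ 4 u)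
    (heq : ElasticaOn u (Set.Ioo x₁ x₂))
    (v : ℝ → ℝ) (hv : ∀ x : ℝ, v x = iteratedDeriv 2 u x / (1 + deriv u x ^ 2) ^ ((5:ℝ)/4)) :
    ∀ x ∈ Set.Icc x₁ x₂, min (v x₁) (v x₂) ≤ v x ∧ v x ≤ max (v x₁) (v x₂) := by
  -- smoothness chain
  have c3 : ContDiff ℝ 3 (deriv u) := by
    have h : ContDiff ℝ (3+1) u := by norm_num; exact hu
    exact (contDiff_succ_iff_deriv.mp h).2.2
  have hQ2 : iteratedDeriv 2 u = deriv (deriv u) := by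
    rw [iteratedDeriv_succ, iteratedDeriv_one]
  have c2 : ContDiff ℝ 2 (iteratedDeriv 2 u) := by
    rw [hQ2]
    have h : ContDiff ℝ (2+1) (deriv u) := by norm_num; exact c3
    exact (contDiff_succ_iff_deriv.mp h).2.2
  have c1 : ContDiff ℝ 1 (iteratedDeriv 3 u) := by
    rw [iteratedDeriv_succ]
    have h : ContDiff ℝ (1+1) (iteratedDeriv 2 u) := by norm_num; exact c2
    exact (contDiff_succ_iff_deriv.mp h).2.2
  -- pointwise derivatives
  have hdP : ∀ x, HasDerivAt (deriv u) (iteratedDeriv 2 u x) x := by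
    intro x; rw [hQ2]
    exact ((c3.differentiable (by norm_num)) x).hasDerivAt
  have hdQ : ∀ x, HasDerivAt (iteratedDeriv 2 u) (iteratedDeriv 3 u x) x := by
    intro x; rw [iteratedDeriv_succ (n := 2)]
    exact ((c2.differentiable (by norm_num)) x).hasDerivAt
  have hdR : ∀ x, HasDerivAt (iteratedDeriv 3 u) (iteratedDeriv 4 u x) x := by
    intro x; rw [iteratedDeriv_succ (n := 3)]
    exact ((c1.differentiable (by norm_num)) x).hasDerivAt
  have hWpos : ∀ x, (0:ℝ) < 1 + deriv u x ^ 2 := fun x => by positivity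
  -- derivative of W = 1 + u'^2
  have hdW : ∀ x, HasDerivAt (fun y => 1 + deriv u y ^ 2)
      (2 * deriv u x * iteratedDeriv 2 u x) x := by
    intro x
    have h := (hasDerivAt_const x (1:ℝ)).add ((hdP x).pow 2)
    refine h.congr_deriv ?_; ring
  -- derivative of W ^ c (real power)
  have hdWc : ∀ (c : ℝ) (x : ℝ), HasDerivAt (fun y => (1 + deriv u y ^ 2) ^ c)
      (c * (1 + deriv u x ^ 2) ^ (c - 1) * (2 * deriv u x * iteratedDeriv 2 u x)) x := by
    intro c x
    have h := (hdW x).rpow_const (p := c) (Or.inl (hWpos x).ne')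
    convert h using 1; ring
  -- derivative of the curvature
  have hdK : ∀ x, HasDerivAt (curv u)
      ((iteratedDeriv 3 u x * (1 + deriv u x ^ 2) - 3 * deriv u x * iteratedDeriv 2 u x ^ 2)
        / (1 + deriv u x ^ 2) ^ ((5:ℝ)/2)) x := by
    intro x
    have h := (hdQ x).div (hdWc ((3:ℝ)/2) x) (by positivity)
    have he : ((iteratedDeriv 3 u x * (1 + deriv u x ^ 2) ^ ((3:ℝ)/2) -
        iteratedDeriv 2 u x * ((3:ℝ)/2 * (1 + deriv u x ^ 2) ^ ((3:ℝ)/2 - 1) *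
          (2 * deriv u x * iteratedDeriv 2 u x))) / ((1 + deriv u x ^ 2) ^ ((3:ℝ)/2)) ^ 2)
        = (iteratedDeriv 3 u x * (1 + deriv u x ^ 2) - 3 * deriv u x * iteratedDeriv 2 u x ^ 2)
        / (1 + deriv u x ^ 2) ^ ((5:ℝ)/2) := by
      have hW := hWpos x
      have h4 := qpow4 hW
      have ht : (0:ℝ) < (1 + deriv u x ^ 2) ^ ((1:ℝ)/4) := Real.rpow_pos_of_pos hW _
      rw [qpow hW ((3:ℝ)/2) 6 (by norm_num), qpow hW ((3:ℝ)/2 - 1) 2 (by norm_num),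
        qpow hW ((5:ℝ)/2) 10 (by norm_num)]
      generalize hT : (1 + deriv u x ^ 2) ^ ((1:ℝ)/4) = T at h4 ht ⊢
      rw [← h4]
      field_simp
    exact he ▸ h
  have hcurv_deriv : deriv (curv u) = fun y =>
      (iteratedDeriv 3 u y * (1 + deriv u y ^ 2) - 3 * deriv u y * iteratedDeriv 2 u y ^ 2)
        / (1 + deriv u y ^ 2) ^ ((5:ℝ)/2) := funext fun y => (hdK y).deriv
  -- the function differentiated in the elastica equation, as a rational function
  have hFfun : (fun y => deriv (curv u) y / Real.sqrt (1 + deriv u y ^ 2)) = fun y =>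
      (iteratedDeriv 3 u y * (1 + deriv u y ^ 2) - 3 * deriv u y * iteratedDeriv 2 u y ^ 2)
        / (1 + deriv u y ^ 2) ^ 3 := by
    funext y
    simp only [hcurv_deriv]
    have hW := hWpos y
    have h4 := qpow4 hW
    have ht : (0:ℝ) < (1 + deriv u y ^ 2) ^ ((1:ℝ)/4) := Real.rpow_pos_of_pos hW _
    rw [Real.sqrt_eq_rpow, qpow hW ((5:ℝ)/2) 10 (by norm_num),
      qpow hW (1/(2:ℝ)) 2 (by norm_num)]
    generalize hT : (1 + deriv u y ^ 2) ^ ((1:ℝ)/4) = T at h4 ht ⊢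
    rw [← h4, div_div]
    ring_nf
  -- derivative of that rational function
  have hdF : ∀ x, HasDerivAt (fun y =>
      (iteratedDeriv 3 u y * (1 + deriv u y ^ 2) - 3 * deriv u y * iteratedDeriv 2 u y ^ 2)
        / (1 + deriv u y ^ 2) ^ 3)
      ((iteratedDeriv 4 u x * (1 + deriv u x ^ 2) ^ 2
        - 10 * deriv u x * iteratedDeriv 2 u x * iteratedDeriv 3 u x * (1 + deriv u x ^ 2)
        - 3 * iteratedDeriv 2 u x ^ 3 * (1 + deriv u x ^ 2)
        + 18 * deriv u x ^ 2 * iteratedDeriv 2 u x ^ 3) / (1 + deriv u x ^ 2) ^ 4) x := by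
    intro x
    have hN : HasDerivAt (fun y => iteratedDeriv 3 u y * (1 + deriv u y ^ 2)
        - 3 * deriv u y * iteratedDeriv 2 u y ^ 2)
        (iteratedDeriv 4 u x * (1 + deriv u x ^ 2)
          + iteratedDeriv 3 u x * (2 * deriv u x * iteratedDeriv 2 u x)
          - 3 * (iteratedDeriv 2 u x ^ 3
          + 2 * deriv u x * iteratedDeriv 2 u x * iteratedDeriv 3 u x)) x := by
      have h := ((hdR x).mul (hdW x)).sub
        (((hasDerivAt_const x (3:ℝ)).mul (hdP x)).mul ((hdQ x).pow 2))
      refine h.congr_deriv ?_; simp only [Pi.mul_apply, Pi.pow_apply]; ring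
    have hD : HasDerivAt (fun y => (1 + deriv u y ^ 2) ^ 3)
        ((3:ℝ) * (1 + deriv u x ^ 2) ^ 2 * (2 * deriv u x * iteratedDeriv 2 u x)) x := by
      have h := (hdW x).pow 3
      refine h.congr_deriv ?_; norm_num
    have h := hN.div hD (by positivity)
    refine h.congr_deriv ?_
    have hW : (1 + deriv u x ^ 2) ≠ 0 := (hWpos x).ne'
    field_simp
    ring
  -- derivative of v
  have hdv : ∀ x, HasDerivAt v
      ((iteratedDeriv 3 u x * (1 + deriv u x ^ 2)
        - (5/2) * deriv u x * iteratedDeriv 2 u x ^ 2) / (1 + deriv u x ^ 2) ^ ((9:ℝ)/4)) x := by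
    intro x
    rw [show v = fun y => iteratedDeriv 2 u y / (1 + deriv u y ^ 2) ^ ((5:ℝ)/4) from funext hv]
    have h := (hdQ x).div (hdWc ((5:ℝ)/4) x) (by positivity)
    refine h.congr_deriv ?_
    have hW := hWpos x
    have h4 := qpow4 hW
    have ht : (0:ℝ) < (1 + deriv u x ^ 2) ^ ((1:ℝ)/4) := Real.rpow_pos_of_pos hW _
    rw [qpow hW ((5:ℝ)/4) 5 (by norm_num), qpow hW ((5:ℝ)/4 - 1) 1 (by norm_num),
      qpow hW ((9:ℝ)/4) 9 (by norm_num)]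
    generalize hT : (1 + deriv u x ^ 2) ^ ((1:ℝ)/4) = T at h4 ht ⊢
    rw [← h4, div_eq_div_iff (by positivity) (by positivity)]
    ring
  -- derivative of v'
  have hdvd : ∀ x, HasDerivAt (fun y =>
      (iteratedDeriv 3 u y * (1 + deriv u y ^ 2)
        - (5/2) * deriv u y * iteratedDeriv 2 u y ^ 2) / (1 + deriv u y ^ 2) ^ ((9:ℝ)/4))
      (((iteratedDeriv 4 u x * (1 + deriv u x ^ 2)
          - 3 * deriv u x * iteratedDeriv 2 u x * iteratedDeriv 3 u x
          - (5/2) * iteratedDeriv 2 u x ^ 3) * (1 + deriv u x ^ 2)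
        - (iteratedDeriv 3 u x * (1 + deriv u x ^ 2)
          - (5/2) * deriv u x * iteratedDeriv 2 u x ^ 2)
          * ((9/2) * deriv u x * iteratedDeriv 2 u x))
        / (1 + deriv u x ^ 2) ^ ((13:ℝ)/4)) x := by
    intro x
    have hM : HasDerivAt (fun y => iteratedDeriv 3 u y * (1 + deriv u y ^ 2)
        - (5/2) * deriv u y * iteratedDeriv 2 u y ^ 2)
        (iteratedDeriv 4 u x * (1 + deriv u x ^ 2)
          + iteratedDeriv 3 u x * (2 * deriv u x * iteratedDeriv 2 u x)
          - (5/2) * (iteratedDeriv 2 u x ^ 3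
          + 2 * deriv u x * iteratedDeriv 2 u x * iteratedDeriv 3 u x)) x := by
      have h := ((hdR x).mul (hdW x)).sub
        (((hasDerivAt_const x ((5:ℝ)/2)).mul (hdP x)).mul ((hdQ x).pow 2))
      refine h.congr_deriv ?_; simp only [Pi.mul_apply, Pi.pow_apply]; ring
    have h := hM.div (hdWc ((9:ℝ)/4) x) (by positivity)
    refine h.congr_deriv ?_
    have hW := hWpos x
    have h4 := qpow4 hW
    have ht : (0:ℝ) < (1 + deriv u x ^ 2) ^ ((1:ℝ)/4) := Real.rpow_pos_of_pos hW _
    rw [qpow hW ((9:ℝ)/4) 9 (by norm_num), qpow hW ((9:ℝ)/4 - 1) 5 (by norm_num),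
      qpow hW ((13:ℝ)/4) 13 (by norm_num)]
    generalize hT : (1 + deriv u x ^ 2) ^ ((1:ℝ)/4) = T at h4 ht ⊢
    rw [← h4, div_eq_div_iff (by positivity) (by positivity)]
    ring
  -- key ODE: v'' = (5/2) u' u'' /(1+u'^2) * v' on the open interval
  have key : ∀ x ∈ Set.Ioo x₁ x₂,
      (((iteratedDeriv 4 u x * (1 + deriv u x ^ 2)
          - 3 * deriv u x * iteratedDeriv 2 u x * iteratedDeriv 3 u x
          - (5/2) * iteratedDeriv 2 u x ^ 3) * (1 + deriv u x ^ 2)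
        - (iteratedDeriv 3 u x * (1 + deriv u x ^ 2)
          - (5/2) * deriv u x * iteratedDeriv 2 u x ^ 2)
          * ((9/2) * deriv u x * iteratedDeriv 2 u x))
        / (1 + deriv u x ^ 2) ^ ((13:ℝ)/4))
      = (5/2) * deriv u x * iteratedDeriv 2 u x / (1 + deriv u x ^ 2) *
        ((iteratedDeriv 3 u x * (1 + deriv u x ^ 2)
          - (5/2) * deriv u x * iteratedDeriv 2 u x ^ 2)
          / (1 + deriv u x ^ 2) ^ ((9:ℝ)/4)) := by
    intro x hx
    have heq' := heq x hx
    rw [hFfun, (hdF x).deriv] at heq'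
    simp only [curv] at heq'
    rw [Real.sqrt_eq_rpow] at heq'
    have hW := hWpos x
    have h4 := qpow4 hW
    have ht : (0:ℝ) < (1 + deriv u x ^ 2) ^ ((1:ℝ)/4) := Real.rpow_pos_of_pos hW _
    rw [qpow hW ((3:ℝ)/2) 6 (by norm_num), qpow hW (1/(2:ℝ)) 2 (by norm_num)] at heq'
    rw [qpow hW ((13:ℝ)/4) 13 (by norm_num), qpow hW ((9:ℝ)/4) 9 (by norm_num)]
    generalize hT : (1 + deriv u x ^ 2) ^ ((1:ℝ)/4) = T at h4 ht heq' ⊢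
    rw [← h4] at heq' ⊢
    generalize hPg : deriv u x = P at h4 heq' ⊢
    generalize hQg : iteratedDeriv 2 u x = Q at heq' ⊢
    generalize hRg : iteratedDeriv 3 u x = R at heq' ⊢
    generalize hSg : iteratedDeriv 4 u x = S at heq' ⊢
    have h18 : (T:ℝ)^18 ≠ 0 := pow_ne_zero _ ht.ne'
    have hE2 : 2*(S*T^8 - 10*P*Q*R*T^4 - 3*Q^3*T^4 + 18*P^2*Q^3) + Q^3 = 0 := by
      field_simp at heq'
      refine mul_left_cancel₀ h18 ?_
      rw [mul_zero]
      linear_combination T ^ 18 * heq'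
    field_simp
    linear_combination 2 * hE2 + (2*Q^3) * h4
  -- the integrating factor
  set hfun : ℝ → ℝ := fun y => (5:ℝ)/2 * deriv u y * iteratedDeriv 2 u y / (1 + deriv u y ^ 2)
    with hfun_def
  have cp : Continuous (deriv u) := c3.continuous
  have cq : Continuous (iteratedDeriv 2 u) := c2.continuous
  have hfc : Continuous hfun := by
    apply Continuous.div
    · exact (continuous_const.mul cp).mul cq
    · exact continuous_const.add (cp.pow 2)
    · exact fun x => (hWpos x).ne'
  set H : ℝ → ℝ := fun y => ∫ t in x₁..y, hfun t with hH_def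
  have hdH : ∀ x, HasDerivAt H (hfun x) x := fun x =>
    (hfc.integral_hasStrictDerivAt x₁ x).hasDerivAt
  set vd : ℝ → ℝ := fun y =>
    (iteratedDeriv 3 u y * (1 + deriv u y ^ 2)
      - (5/2) * deriv u y * iteratedDeriv 2 u y ^ 2) / (1 + deriv u y ^ 2) ^ ((9:ℝ)/4)
    with hvd_def
  set g : ℝ → ℝ := fun y => vd y * Real.exp (-(H y)) with hg_def
  have hdg : ∀ x, HasDerivAt g
      ((((iteratedDeriv 4 u x * (1 + deriv u x ^ 2)
          - 3 * deriv u x * iteratedDeriv 2 u x * iteratedDeriv 3 u x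
          - (5/2) * iteratedDeriv 2 u x ^ 3) * (1 + deriv u x ^ 2)
        - (iteratedDeriv 3 u x * (1 + deriv u x ^ 2)
          - (5/2) * deriv u x * iteratedDeriv 2 u x ^ 2)
          * ((9/2) * deriv u x * iteratedDeriv 2 u x))
        / (1 + deriv u x ^ 2) ^ ((13:ℝ)/4)) * Real.exp (-(H x))
        + vd x * (Real.exp (-(H x)) * (-(hfun x)))) x := by
    intro x
    exact (hdvd x).mul (((hdH x).neg).exp)
  have hg0 : ∀ x ∈ Set.Ioo x₁ x₂, HasDerivAt g 0 x := by
    intro x hx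
    have h := hdg x
    rw [key x hx] at h
    convert h using 1
    simp only [hvd_def, hfun_def]
    ring
  have hgdiff : Differentiable ℝ g := fun x => (hdg x).differentiableAt
  -- g is constant on the open interval
  have gconst : ∀ y ∈ Set.Ioo x₁ x₂, ∀ z ∈ Set.Ioo x₁ x₂, y ≤ z → g z = g y := by
    intro y hy z hz hyz
    have hcont : ContinuousOn g (Set.Icc y z) := hgdiff.continuous.continuousOn
    have hder : ∀ w ∈ Set.Ico y z, HasDerivWithinAt g 0 (Set.Ici w) w := by
      intro w hw
      exact (hg0 w ⟨lt_of_lt_of_le hy.1 hw.1, lt_trans hw.2 hz.2⟩).hasDerivWithinAt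
    exact constant_of_has_deriv_right_zero hcont hder z ⟨hyz, le_refl z⟩
  set x₀ : ℝ := (x₁ + x₂) / 2 with hx₀_def
  have hx₀ : x₀ ∈ Set.Ioo x₁ x₂ := ⟨by simp only [hx₀_def]; linarith, by simp only [hx₀_def]; linarith⟩
  have gval : ∀ z ∈ Set.Ioo x₁ x₂, g z = g x₀ := by
    intro z hz
    rcases le_total z x₀ with h | h
    · exact (gconst z hz x₀ hx₀ h).symm
    · exact gconst x₀ hx₀ z hz h
  -- deriv v = vd
  have hderiv_v : ∀ x, deriv v x = vd x := fun x => (hdv x).deriv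
  have hvdiff : Differentiable ℝ v := fun x => (hdv x).differentiableAt
  have hx₁Icc : x₁ ∈ Set.Icc x₁ x₂ := Set.left_mem_Icc.mpr hlt.le
  have hx₂Icc : x₂ ∈ Set.Icc x₁ x₂ := Set.right_mem_Icc.mpr hlt.le
  rcases le_or_gt 0 (g x₀) with hC | hC
  · -- v' ≥ 0 on the open interval: v is monotone
    have hmono : MonotoneOn v (Set.Icc x₁ x₂) := by
      apply monotoneOn_of_deriv_nonneg (convex_Icc x₁ x₂) hvdiff.continuous.continuousOn
        hvdiff.differentiableOn
      intro z hz
      rw [interior_Icc] at hz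
      rw [hderiv_v z]
      have h := gval z hz
      have hC' := hC
      simp only [hg_def] at h hC'
      nlinarith [Real.exp_pos (-(H z)), Real.exp_pos (-(H x₀))]
    intro x hx
    constructor
    · exact le_trans (min_le_left _ _) (hmono hx₁Icc hx hx.1)
    · exact le_trans (hmono hx hx₂Icc hx.2) (le_max_right _ _)
  · -- v' ≤ 0 on the open interval: v is antitone
    have hanti : AntitoneOn v (Set.Icc x₁ x₂) := by
      apply antitoneOn_of_deriv_nonpos (convex_Icc x₁ x₂) hvdiff.continuous.continuousOn
        hvdiff.differentiableOn
      intro z hz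
      rw [interior_Icc] at hz
      rw [hderiv_v z]
      have h := gval z hz
      have hC' := hC
      simp only [hg_def] at h hC'
      nlinarith [Real.exp_pos (-(H z)), Real.exp_pos (-(H x₀))]
    intro x hx
    constructor
    · exact le_trans (min_le_right _ _) (hanti hx hx₂Icc hx.2)
    · exact le_trans (hanti hx₁Icc hx hx.1) (le_max_left _ _)
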